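/- Closed form of the DRIG-A estimator: Let $\Sigma_0 = \mathbb{E}[X^0{X^0}^\top] \succ 0$, $g_0 = \mathbb{E}[X^0 Y^0]$, $\Delta_x = \sum_e\omega^e(\mathbb{E}[X^e{X^e}^\top] - \Sigma_0)$ symmetric PSD, $\Delta_{xy} = \sum_e\omega^e(\mathbb{E}[X^eY^e] - g_0)$, $\Gamma_x \in \mathbb{R}^{p\times p}$ symmetric, $\gamma_y \in \mathbb{R}$, and suppose $\Sigma_0 + \Gamma_x \Delta_x \Gamma_x \succ 0$. Then the minimizer of $b \mapsto \mathbb{E}[(Y^0 - b^\top X^0)^2] + \sum_e \omega^e\big(\mathbb{E}[(\gamma_y Y^e - b^\top\Gamma_x X^e)^2] - \mathbb{E}[(\gamma_y Y^0 - b^\top\Gamma_x X^0)^2]\big)$ is uniquely $b^{\mathrm{opt}}_\Gamma = (\Sigma_0 + \Gamma_x\Delta_x\Gamma_x)^{-1}(g_0 + \gamma_y\Gamma_x\Delta_{xy})$. -/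

import Mathlib

open Matrix MeasureTheory Finset

lemma int_sq_expand {p : ℕ} {Ω : Type*} [MeasurableSpace Ω] (P : Measure Ω)
    (X : Ω → Fin p → ℝ) (Y : Ω → ℝ)
    (hXX : ∀ i j, Integrable (fun ω => X ω i * X ω j) P)
    (hXY : ∀ i, Integrable (fun ω => X ω i * Y ω) P)
    (hYY : Integrable (fun ω => (Y ω) ^ 2) P) (α : ℝ) (c : Fin p → ℝ) :
    ∫ ω, (α * Y ω - c ⬝ᵥ X ω) ^ 2 ∂P
      = α ^ 2 * (∫ ω, (Y ω) ^ 2 ∂P)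
        - 2 * α * (∑ i, c i * ∫ ω, X ω i * Y ω ∂P)
        + ∑ i, ∑ j, c i * c j * ∫ ω, X ω i * X ω j ∂P := by
  have key : ∀ ω, (α * Y ω - c ⬝ᵥ X ω) ^ 2
      = α ^ 2 * (Y ω) ^ 2 - 2 * α * (∑ i, c i * (X ω i * Y ω))
        + ∑ i, ∑ j, c i * c j * (X ω i * X ω j) := by
    intro ω
    have h1 : (∑ i, c i * X ω i) * Y ω = ∑ i, c i * (X ω i * Y ω) := by
      rw [Finset.sum_mul]; exact Finset.sum_congr rfl fun i _ => by ring
    have h2 : (∑ i, c i * X ω i) ^ 2 = ∑ i, ∑ j, c i * c j * (X ω i * X ω j) := by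
      rw [sq, Finset.sum_mul_sum]
      exact Finset.sum_congr rfl fun i _ => Finset.sum_congr rfl fun j _ => by ring
    simp only [dotProduct]
    rw [sub_sq, h2, ← h1]; ring
  have hSY : Integrable (fun ω => ∑ i, c i * (X ω i * Y ω)) P :=
    integrable_finset_sum _ fun i _ => (hXY i).const_mul _
  have hSS : Integrable (fun ω => ∑ i, ∑ j, c i * c j * (X ω i * X ω j)) P :=
    integrable_finset_sum _ fun i _ =>
      integrable_finset_sum _ fun j _ => (hXX i j).const_mul _
  calc ∫ ω, (α * Y ω - c ⬝ᵥ X ω) ^ 2 ∂P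
      = ∫ ω, (α ^ 2 * (Y ω) ^ 2 - 2 * α * (∑ i, c i * (X ω i * Y ω))
          + ∑ i, ∑ j, c i * c j * (X ω i * X ω j)) ∂P := by
        exact integral_congr_ae (Filter.Eventually.of_forall key)
    _ = α ^ 2 * (∫ ω, (Y ω) ^ 2 ∂P)
        - 2 * α * (∑ i, c i * ∫ ω, X ω i * Y ω ∂P)
        + ∑ i, ∑ j, c i * c j * ∫ ω, X ω i * X ω j ∂P := by
        have h1 : Integrable (fun ω => α ^ 2 * (Y ω) ^ 2
            - 2 * α * ∑ i, c i * (X ω i * Y ω)) P :=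
          (hYY.const_mul _).sub (hSY.const_mul _)
        have h2 : Integrable (fun ω => α ^ 2 * (Y ω) ^ 2) P := hYY.const_mul _
        have h3 : Integrable (fun ω => 2 * α * ∑ i, c i * (X ω i * Y ω)) P :=
          hSY.const_mul _
        rw [integral_add h1 hSS]
        rw [integral_sub h2 h3]
        rw [integral_const_mul, integral_const_mul]
        rw [integral_finset_sum _ (fun i _ => (hXY i).const_mul _)]
        rw [integral_finset_sum _
            (fun i _ => integrable_finset_sum _ fun j _ => (hXX i j).const_mul _)]
        simp only [integral_const_mul]
        congr 1
        exact Finset.sum_congr rfl fun i _ => by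
          rw [integral_finset_sum _ (fun j _ => (hXX i j).const_mul _)]
          simp only [integral_const_mul]

lemma quad_sum {p : ℕ} (A : Matrix (Fin p) (Fin p) ℝ) (b : Fin p → ℝ) :
    ∑ i, ∑ j, b i * b j * A i j = b ⬝ᵥ (A *ᵥ b) := by
  simp only [dotProduct, mulVec, Finset.mul_sum]
  exact Finset.sum_congr rfl fun i _ => Finset.sum_congr rfl fun j _ => by ring

lemma dot_sum_smul_mulVec {p : ℕ} {ι : Type*} [Fintype ι]
    (A : ι → Matrix (Fin p) (Fin p) ℝ) (c : ι → ℝ) (x : Fin p → ℝ) :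
    x ⬝ᵥ ((∑ e, c e • A e) *ᵥ x) = ∑ e, c e * (x ⬝ᵥ (A e *ᵥ x)) := by
  have h : ∀ i, ((∑ e, c e • A e) *ᵥ x) i = ∑ e, c e * ((A e *ᵥ x) i) := by
    intro i
    simp only [mulVec, dotProduct, Finset.sum_apply, Matrix.sum_apply, Matrix.smul_apply,
      smul_eq_mul, Finset.sum_mul, Finset.mul_sum]
    rw [Finset.sum_comm]
    exact Finset.sum_congr rfl fun e _ => Finset.sum_congr rfl fun j _ => by ring
  simp only [dotProduct, h, Finset.mul_sum]
  rw [Finset.sum_comm]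
  exact Finset.sum_congr rfl fun e _ =>
    Finset.sum_congr rfl fun i _ => by ring

/-- Closed form of the DRIG-A estimator: the DRIG-A population objective is uniquely
minimized at `b^opt_Γ = (Σ₀ + Γₓ Δₓ Γₓ)⁻¹ (g₀ + γ_y Γₓ Δ_{xy})`. -/
theorem driga_closed_form {p : ℕ} {ι : Type*} [Fintype ι] (e₀ : ι)
    {Ω : Type*} [MeasurableSpace Ω] (P : Measure Ω) [IsProbabilityMeasure P]
    (X : ι → Ω → Fin p → ℝ) (Y : ι → Ω → ℝ)
    (hXX : ∀ e i j, Integrable (fun ω => X e ω i * X e ω j) P)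
    (hXY : ∀ e i, Integrable (fun ω => X e ω i * Y e ω) P)
    (hYY : ∀ e, Integrable (fun ω => (Y e ω) ^ 2) P)
    (ωw : ι → ℝ) (hωpos : ∀ e, 0 < ωw e) (hωsum : ∑ e, ωw e = 1)
    (Sig0 : Matrix (Fin p) (Fin p) ℝ)
    (hSig0 : Sig0 = Matrix.of fun i j => ∫ ω, X e₀ ω i * X e₀ ω j ∂P)
    (hSig0PD : Sig0.PosDef)
    (g0 : Fin p → ℝ) (hg0 : ∀ i, g0 i = ∫ ω, X e₀ ω i * Y e₀ ω ∂P)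
    (Δx : Matrix (Fin p) (Fin p) ℝ)
    (hΔx : Δx = ∑ e, ωw e •
        ((Matrix.of fun i j => ∫ ω, X e ω i * X e ω j ∂P) - Sig0))
    (hΔxPSD : Δx.PosSemidef)
    (Δxy : Fin p → ℝ)
    (hΔxy : ∀ i, Δxy i = ∑ e, ωw e * ((∫ ω, X e ω i * Y e ω ∂P) - g0 i))
    (Γx : Matrix (Fin p) (Fin p) ℝ) (hΓx : Γx.IsSymm) (γy : ℝ)
    (hPD : (Sig0 + Γx * Δx * Γx).PosDef)
    (f : (Fin p → ℝ) → ℝ)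
    (hf : ∀ b, f b = (∫ ω, (Y e₀ ω - b ⬝ᵥ X e₀ ω) ^ 2 ∂P)
        + ∑ e, ωw e * ((∫ ω, (γy * Y e ω - b ⬝ᵥ (Γx *ᵥ X e ω)) ^ 2 ∂P)
            - ∫ ω, (γy * Y e₀ ω - b ⬝ᵥ (Γx *ᵥ X e₀ ω)) ^ 2 ∂P))
    (bopt : Fin p → ℝ)
    (hbopt : bopt = (Sig0 + Γx * Δx * Γx)⁻¹ *ᵥ (g0 + γy • (Γx *ᵥ Δxy))) :
    (∀ b, f bopt ≤ f b) ∧ (∀ b, f b = f bopt → b = bopt) := by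
  classical
  set M : Matrix (Fin p) (Fin p) ℝ := Sig0 + Γx * Δx * Γx with hMdef
  set v : Fin p → ℝ := g0 + γy • (Γx *ᵥ Δxy) with hvdef
  have hMt : Mᵀ = M := by simpa using hPD.1.eq
  have hswap : ∀ x y : Fin p → ℝ, x ⬝ᵥ (M *ᵥ y) = y ⬝ᵥ (M *ᵥ x) := by
    intro x y
    rw [dotProduct_mulVec, ← mulVec_transpose, hMt, dotProduct_comm]
  have hΓswap : ∀ x w : Fin p → ℝ, x ⬝ᵥ (Γx *ᵥ w) = (Γx *ᵥ x) ⬝ᵥ w := by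
    intro x w
    rw [dotProduct_mulVec, ← mulVec_transpose, hΓx]
  -- quadratic representation of f
  have hrep : ∀ b : Fin p → ℝ, f b
      = ((∫ ω, (Y e₀ ω) ^ 2 ∂P)
          + ∑ e, ωw e * (γy ^ 2 * ((∫ ω, (Y e ω) ^ 2 ∂P) - ∫ ω, (Y e₀ ω) ^ 2 ∂P)))
        + (b ⬝ᵥ (M *ᵥ b) - 2 * (b ⬝ᵥ v)) := by
    intro b
    set c : Fin p → ℝ := Γx *ᵥ b with hc
    have h0 : ∫ ω, (Y e₀ ω - b ⬝ᵥ X e₀ ω) ^ 2 ∂P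
        = (∫ ω, (Y e₀ ω) ^ 2 ∂P) - 2 * (∑ i, b i * ∫ ω, X e₀ ω i * Y e₀ ω ∂P)
          + ∑ i, ∑ j, b i * b j * ∫ ω, X e₀ ω i * X e₀ ω j ∂P := by
      have := int_sq_expand P (X e₀) (Y e₀) (hXX e₀) (hXY e₀) (hYY e₀) 1 b
      simpa using this
    have he : ∀ e, ∫ ω, (γy * Y e ω - b ⬝ᵥ (Γx *ᵥ X e ω)) ^ 2 ∂P
        = γy ^ 2 * (∫ ω, (Y e ω) ^ 2 ∂P)
          - 2 * γy * (∑ i, c i * ∫ ω, X e ω i * Y e ω ∂P)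
          + ∑ i, ∑ j, c i * c j * ∫ ω, X e ω i * X e ω j ∂P := by
      intro e
      have hrw : ∀ ω, b ⬝ᵥ (Γx *ᵥ X e ω) = c ⬝ᵥ X e ω := fun ω => hΓswap b (X e ω)
      simp_rw [hrw]
      exact int_sq_expand P (X e) (Y e) (hXX e) (hXY e) (hYY e) γy c
    have hq : ∀ (d : Fin p → ℝ) (e : ι),
        ∑ i, ∑ j, d i * d j * ∫ ω, X e ω i * X e ω j ∂P
          = d ⬝ᵥ ((Matrix.of fun i j => ∫ ω, X e ω i * X e ω j ∂P) *ᵥ d) := by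
      intro d e
      simpa [Matrix.of_apply] using
        quad_sum (Matrix.of fun i j => ∫ ω, X e ω i * X e ω j ∂P) d
    have hbg0 : ∑ i, b i * ∫ ω, X e₀ ω i * Y e₀ ω ∂P = b ⬝ᵥ g0 := by
      simp [dotProduct, hg0]
    have hcg0 : ∑ i, c i * ∫ ω, X e₀ ω i * Y e₀ ω ∂P = c ⬝ᵥ g0 := by
      simp [dotProduct, hg0]
    have hDxy : c ⬝ᵥ Δxy
        = ∑ e, ωw e * ((∑ i, c i * ∫ ω, X e ω i * Y e ω ∂P) - c ⬝ᵥ g0) := by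
      simp only [dotProduct, hΔxy, Finset.mul_sum]
      rw [Finset.sum_comm]
      refine Finset.sum_congr rfl fun e _ => ?_
      rw [mul_sub, Finset.mul_sum, Finset.mul_sum, ← Finset.sum_sub_distrib]
      exact Finset.sum_congr rfl fun i _ => by ring
    have hDx : c ⬝ᵥ (Δx *ᵥ c)
        = ∑ e, ωw e * (c ⬝ᵥ ((Matrix.of fun i j => ∫ ω, X e ω i * X e ω j ∂P) *ᵥ c)
            - c ⬝ᵥ (Sig0 *ᵥ c)) := by
      rw [hΔx, dot_sum_smul_mulVec]
      exact Finset.sum_congr rfl fun e _ => by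
        rw [Matrix.sub_mulVec, dotProduct_sub]
    have hMb : b ⬝ᵥ (M *ᵥ b) = b ⬝ᵥ (Sig0 *ᵥ b) + c ⬝ᵥ (Δx *ᵥ c) := by
      rw [hMdef, add_mulVec, dotProduct_add]
      congr 1
      rw [Matrix.mul_assoc, ← mulVec_mulVec, hΓswap, ← mulVec_mulVec]
    have hbv : b ⬝ᵥ v = b ⬝ᵥ g0 + γy * (c ⬝ᵥ Δxy) := by
      rw [hvdef, dotProduct_add, dotProduct_smul, smul_eq_mul, hΓswap]
    rw [hf b, h0]
    simp_rw [he, hq b, hq c, ← hSig0, hbg0, hcg0]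
    have step : ∑ e, ωw e *
          ((γy ^ 2 * (∫ ω, (Y e ω) ^ 2 ∂P)
              - 2 * γy * (∑ i, c i * ∫ ω, X e ω i * Y e ω ∂P)
              + c ⬝ᵥ ((Matrix.of fun i j => ∫ ω, X e ω i * X e ω j ∂P) *ᵥ c))
            - (γy ^ 2 * (∫ ω, (Y e₀ ω) ^ 2 ∂P) - 2 * γy * (c ⬝ᵥ g0)
              + c ⬝ᵥ (Sig0 *ᵥ c)))
        = (∑ e, ωw e * (γy ^ 2 * ((∫ ω, (Y e ω) ^ 2 ∂P) - ∫ ω, (Y e₀ ω) ^ 2 ∂P)))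
          - 2 * γy * (c ⬝ᵥ Δxy) + c ⬝ᵥ (Δx *ᵥ c) := by
      rw [hDxy, hDx, Finset.mul_sum, ← Finset.sum_sub_distrib, ← Finset.sum_add_distrib]
      exact Finset.sum_congr rfl fun e _ => by ring
    rw [step, hMb, hbv]
    ring
  have hMbopt : M *ᵥ bopt = v := by
    rw [hbopt, mulVec_mulVec, Matrix.mul_nonsing_inv _
      (isUnit_iff_ne_zero.2 hPD.det_pos.ne'), one_mulVec]
  have hdiff : ∀ b, f b - f bopt = (b - bopt) ⬝ᵥ (M *ᵥ (b - bopt)) := by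
    intro b
    rw [hrep b, hrep bopt, mulVec_sub, dotProduct_sub, sub_dotProduct, sub_dotProduct,
      hswap bopt b, hMbopt]
    ring
  constructor
  · intro b
    rcases eq_or_ne b bopt with h' | h'
    · simp [h']
    · have hpos : 0 < (b - bopt) ⬝ᵥ (M *ᵥ (b - bopt)) := by
        simpa using hPD.dotProduct_mulVec_pos (sub_ne_zero.2 h')
      have h := hdiff b
      linarith
  · intro b hb
    by_contra h'
    have hpos : 0 < (b - bopt) ⬝ᵥ (M *ᵥ (b - bopt)) := by
      simpa using hPD.dotProduct_mulVec_pos (sub_ne_zero.2 h')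
    have h := hdiff b
    rw [hb, sub_self] at h
    rw [← h] at hpos
    exact lt_irrefl 0 hpos
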